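/- arXiv:1208.4458 — 3 statements merged into one kernel-verified Lean document; each statement's English description precedes it below -/
import Mathlib

section
/- Let (R, m, k) be a commutative noetherian local ring and \(\chi: X \to Y\) an R-linear map of R-modules. If \(\operatorname{Coker}(\chi)\) has a non-zero free direct summand, then \(\operatorname{Ker}(\chi^*) \not\subseteq m\, Y^*\), where \((-)^* = \operatorname{Hom}_R(-, R)\). -/
open IsLocalRing

/-- A module has a non-zero free direct summand if it decomposes as an internal direct
sum of two submodules, one of which is non-zero and free. -/
def HasNonzeroFreeDirectSummand (R M : Type) [Ring R] [AddCommGroup M] [Module R M] : Prop :=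
  ∃ (A B : Submodule R M), IsCompl A B ∧ A ≠ ⊥ ∧ Module.Free R A

lemma apply_mem_of_mem_smul_top
    (R Y : Type) [CommRing R] [AddCommGroup Y] [Module R Y] (I : Ideal R)
    {g : Module.Dual R Y} (hg : g ∈ I • (⊤ : Submodule R (Module.Dual R Y))) (y : Y) :
    g y ∈ I := by
  refine Submodule.smul_induction_on hg ?_ ?_
  · intro a ha φ _
    simpa using Ideal.mul_mem_right (φ y) I ha
  · intro f g hf hg
    simpa using add_mem hf hg

/-- If `χ : X → Y` is `R`-linear over a commutative noetherian local ring `(R, m, k)` and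
`Coker χ` has a non-zero free direct summand, then `Ker (χ*) ⊄ m Y*`. -/
theorem ker_dualMap_not_le_of_coker_free_summand
    (R : Type) [CommRing R] [IsLocalRing R] [IsNoetherianRing R]
    (X Y : Type) [AddCommGroup X] [Module R X] [AddCommGroup Y] [Module R Y]
    (χ : X →ₗ[R] Y)
    (h : HasNonzeroFreeDirectSummand R (Y ⧸ LinearMap.range χ)) :
    ¬ (LinearMap.ker χ.dualMap ≤
        maximalIdeal R • (⊤ : Submodule R (Module.Dual R Y))) := by
  obtain ⟨A, B, hcompl, hA, hfree⟩ := h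
  haveI := hfree
  -- index of a basis of A is nonempty
  let b := Module.Free.chooseBasis R A
  have hne : Nonempty (Module.Free.ChooseBasisIndex R A) := by
    by_contra hempty
    haveI : IsEmpty (Module.Free.ChooseBasisIndex R A) := not_nonempty_iff.mp hempty
    haveI : Subsingleton A := b.repr.toEquiv.subsingleton
    exact hA (Submodule.eq_bot_of_subsingleton)
  obtain ⟨i⟩ := hne
  -- build g : Y →ₗ R
  let π := LinearMap.range χ |>.mkQ
  let p := A.linearProjOfIsCompl B hcompl
  let g : Module.Dual R Y := (b.coord i).comp (p.comp π)
  have hker : g ∈ LinearMap.ker χ.dualMap := by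
    rw [LinearMap.mem_ker]
    ext x
    have : π (χ x) = 0 := (Submodule.Quotient.mk_eq_zero _).mpr ⟨x, rfl⟩
    simp [g, LinearMap.dualMap_apply, this]
  intro hle
  have hg := hle hker
  -- find y with g y = 1
  obtain ⟨y, hy⟩ := Submodule.mkQ_surjective (LinearMap.range χ) (b i : Y ⧸ LinearMap.range χ)
  have hgy : g y = 1 := by
    have hp : p ((b i : A) : Y ⧸ LinearMap.range χ) = b i :=
      Submodule.linearProjOfIsCompl_apply_left hcompl (b i)
    simp [g, π, hy, hp]
  have h1 : (1 : R) ∈ maximalIdeal R := by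
    rw [← hgy]
    exact apply_mem_of_mem_smul_top R Y (maximalIdeal R) hg y
  exact (Ideal.ne_top_iff_one _).mp (IsLocalRing.maximalIdeal.isMaximal R).ne_top h1
end

section
/- Let (R, m, k) be a commutative noetherian local ring, \(\chi: X \to Y\) an R-linear map with Y a finite free R-module. If \(\operatorname{Ker}(\chi^*) \not\subseteq m\, Y^*\), then \(\operatorname{Coker}(\chi)\) has a non-zero free direct summand. -/
open IsLocalRing

/-- A module surjecting onto `R` (nontrivial) has a nonzero free direct summand. -/
theorem hasNonzeroFreeDirectSummand_of_surjective (R M : Type) [CommRing R] [Nontrivial R]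
    [AddCommGroup M] [Module R M] (g : M →ₗ[R] R) (hg : Function.Surjective g) :
    HasNonzeroFreeDirectSummand R M := by
  obtain ⟨e, he⟩ := hg 1
  have hinj : Function.Injective (LinearMap.toSpanSingleton R M e) := by
    intro a b hab
    have : g (a • e) = g (b • e) := by
      simpa [LinearMap.toSpanSingleton, LinearMap.smulRight] using congrArg g hab
    simpa [he] using this
  refine ⟨Submodule.span R {e}, LinearMap.ker g, ⟨?_, ?_⟩, ?_, ?_⟩
  · rw [disjoint_iff]
    ext x
    simp only [Submodule.mem_inf, Submodule.mem_bot, Submodule.mem_span_singleton,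
      LinearMap.mem_ker]
    constructor
    · rintro ⟨⟨r, rfl⟩, hx⟩
      simp only [map_smul, he, smul_eq_mul, mul_one] at hx
      simp [hx]
    · rintro rfl; exact ⟨⟨0, by simp⟩, by simp⟩
  · rw [codisjoint_iff, eq_top_iff]
    intro x _
    have hx : x = g x • e + (x - g x • e) := by module
    rw [hx]
    refine Submodule.add_mem_sup (Submodule.mem_span_singleton.2 ⟨g x, rfl⟩) ?_
    simp [he]
  · intro hbot
    have hmem : e ∈ Submodule.span R {e} := Submodule.mem_span_singleton_self e
    rw [hbot, Submodule.mem_bot] at hmem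
    rw [hmem, map_zero] at he
    exact one_ne_zero he.symm
  · have : Submodule.span R {e} = LinearMap.range (LinearMap.toSpanSingleton R M e) :=
      (LinearMap.span_singleton_eq_range R M e)
    rw [this]
    exact Module.Free.of_equiv (LinearEquiv.ofInjective _ hinj)

/-- If `χ : X → Y` is `R`-linear over a commutative noetherian local ring `(R, m, k)`, `Y`
is finite free, and `Ker (χ*) ⊄ m Y*`, then `Coker χ` has a non-zero free direct summand. -/
theorem coker_has_free_summand_of_ker_dualMap_not_le
    (R : Type) [CommRing R] [IsLocalRing R] [IsNoetherianRing R]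
    (X Y : Type) [AddCommGroup X] [Module R X] [AddCommGroup Y] [Module R Y]
    [Module.Finite R Y] [Module.Free R Y]
    (χ : X →ₗ[R] Y)
    (h : ¬ (LinearMap.ker χ.dualMap ≤
        maximalIdeal R • (⊤ : Submodule R (Module.Dual R Y)))) :
    HasNonzeroFreeDirectSummand R (Y ⧸ LinearMap.range χ) := by
  -- pick f in ker χ* not in m Y*
  obtain ⟨f, hfker, hfm⟩ := SetLike.not_le_iff_exists.1 h
  rw [LinearMap.mem_ker] at hfker
  -- f is surjective
  have hsurj : Function.Surjective f := by
    by_contra hns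
    apply hfm
    -- range f is a proper ideal, hence ≤ m
    have hrange : LinearMap.range f ≠ ⊤ := by
      intro ht
      exact hns (LinearMap.range_eq_top.1 ht)
    have hle : LinearMap.range f ≤ maximalIdeal R :=
      le_maximalIdeal hrange
    -- expand f in dual basis
    let b := Module.Free.chooseBasis R Y
    have hf : f = ∑ i, f (b i) • b.dualBasis i := by
      conv_lhs => rw [← b.dualBasis.sum_repr f]
      refine Finset.sum_congr rfl fun i _ => ?_
      rw [b.dualBasis_repr f i]
    rw [hf]
    refine Submodule.sum_mem _ fun i _ => ?_
    exact Submodule.smul_mem_smul (hle ⟨b i, rfl⟩) trivial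
  -- range χ ≤ ker f
  have hrk : LinearMap.range χ ≤ LinearMap.ker f := by
    rintro _ ⟨x, rfl⟩
    have := congrArg (fun (g : Module.Dual R X) => g x) hfker
    simpa [LinearMap.dualMap, Module.Dual.transpose_apply] using this
  -- induced map on cokernel
  let g : (Y ⧸ LinearMap.range χ) →ₗ[R] R := Submodule.liftQ _ f hrk
  have hgs : Function.Surjective g := by
    intro r
    obtain ⟨y, hy⟩ := hsurj r
    exact ⟨Submodule.Quotient.mk y, hy⟩
  exact hasNonzeroFreeDirectSummand_of_surjective R _ g hgs
end

section
/- Let (S, m_S, k) and (T, m_T, k) be singular commutative noetherian local rings, N a finite S-module and P a finite T-module of finite projective dimension over S and T respectively, with \(N/m_S N \cong V \cong P/m_T P\) for a k-vector space V of dimension v. Set \(R = S \times_k T\) and \(M = N \times_V P\). Then as R-modules, \(m_R M \cong m_S N \oplus m_T P\), where \(m_R = m_S \oplus m_T\). -/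
open CategoryTheory IsLocalRing

/-- An object of `ModuleCat R` has finite projective dimension if it admits a projective
resolution that vanishes in all sufficiently high degrees. -/
def HasFiniteProjectiveDimension {R : Type} [Ring R] (M : ModuleCat R) : Prop :=
  ∃ (n : ℕ) (P : CategoryTheory.ProjectiveResolution M),
    ∀ i, n < i → CategoryTheory.Limits.IsZero (P.complex.X i)

/-- A noetherian local ring is regular if its maximal ideal can be generated by
`dim R` elements. -/
def IsRegularLocal (R : Type) [CommRing R] [IsLocalRing R] : Prop :=
  ∃ s : Finset R, Ideal.span (s : Set R) = IsLocalRing.maximalIdeal R ∧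
    (s.card : WithBot ℕ∞) = ringKrullDim R

/-- Let `S`, `T` be singular noetherian local rings with common residue field `k`,
`N` a finite `S`-module and `P` a finite `T`-module of finite projective dimension, with
`N/m_S N ≅ V ≅ P/m_T P`.  Over the fiber product `R = S ×_k T` (with maximal ideal
`m_R = m_S ⊕ m_T`), the fiber product module `M = N ×_V P` satisfies
`m_R M ≅ m_S N ⊕ m_T P` as `R`-modules. -/
theorem fiber_product_module_max_submodule
    (S T k : Type) [CommRing S] [CommRing T] [Field k]
    [IsLocalRing S] [IsLocalRing T] [IsNoetherianRing S] [IsNoetherianRing T]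
    (hSsing : ¬ IsRegularLocal S) (hTsing : ¬ IsRegularLocal T)
    (εS : S →+* k) (εT : T →+* k)
    (hεS : Function.Surjective εS) (hεT : Function.Surjective εT)
    (hkS : RingHom.ker εS = maximalIdeal S) (hkT : RingHom.ker εT = maximalIdeal T)
    (R : Subring (S × T)) (hR : ∀ x : S × T, x ∈ R ↔ εS x.1 = εT x.2)
    (N : Type) [AddCommGroup N] [Module S N] [Module.Finite S N]
    (P : Type) [AddCommGroup P] [Module T P] [Module.Finite T P]
    (hpdN : HasFiniteProjectiveDimension (ModuleCat.of S N))
    (hpdP : HasFiniteProjectiveDimension (ModuleCat.of T P))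
    (V : Type) [AddCommGroup V] [Module k V] (v : ℕ) (hv : Module.finrank k V = v)
    (πN : N →+ V) (πP : P →+ V)
    (hπN : Function.Surjective πN) (hπP : Function.Surjective πP)
    (hkerN : ∀ x : N, πN x = 0 ↔ x ∈ maximalIdeal S • (⊤ : Submodule S N))
    (hkerP : ∀ x : P, πP x = 0 ↔ x ∈ maximalIdeal T • (⊤ : Submodule T P))
    (hsemiN : ∀ (s : S) (x : N), πN (s • x) = εS s • πN x)
    (hsemiP : ∀ (t : T) (x : P), πP (t • x) = εT t • πP x) :
    letI : Module R N := Module.compHom N ((RingHom.fst S T).comp R.subtype)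
    letI : Module R P := Module.compHom P ((RingHom.snd S T).comp R.subtype)
    ∀ (M M' : Submodule R (N × P)) (I : Ideal R),
      (∀ x : N × P, x ∈ M ↔ πN x.1 = πP x.2) →
      (∀ x : N × P, x ∈ M' ↔
        x.1 ∈ maximalIdeal S • (⊤ : Submodule S N) ∧
        x.2 ∈ maximalIdeal T • (⊤ : Submodule T P)) →
      (∀ x : R, x ∈ I ↔
        ((x : S × T).1 ∈ maximalIdeal S ∧ (x : S × T).2 ∈ maximalIdeal T)) →
      Nonempty (↥(I • M) ≃ₗ[R] ↥M') := by
  letI : Module R N := Module.compHom N ((RingHom.fst S T).comp R.subtype)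
  letI : Module R P := Module.compHom P ((RingHom.snd S T).comp R.subtype)
  intro M M' I hM hM' hI
  suffices h : I • M = M' from ⟨LinearEquiv.ofEq _ _ h⟩
  apply le_antisymm
  · refine Submodule.smul_le.2 fun r hr m hm => ?_
    rw [hI] at hr
    rw [hM']
    constructor
    · exact Submodule.smul_mem_smul hr.1 Submodule.mem_top
    · exact Submodule.smul_mem_smul hr.2 Submodule.mem_top
  · rintro ⟨x, y⟩ hxy
    rw [hM'] at hxy
    obtain ⟨hx, hy⟩ := hxy
    have key1 : ((x, (0 : P)) : N × P) ∈ I • M := by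
      refine Submodule.smul_induction_on (p := fun z => ((z, (0:P)) : N × P) ∈ I • M) hx ?_ ?_
      · intro r hr n _
        obtain ⟨p, hp⟩ := hπP (πN n)
        have hrR : ((r, (0 : T)) : S × T) ∈ R := by
          rw [hR]
          have : εS r = 0 := by
            rw [← RingHom.mem_ker, hkS]; exact hr
          simp [this]
        have hrI : (⟨(r, 0), hrR⟩ : R) ∈ I := by
          rw [hI]
          exact ⟨hr, (maximalIdeal T).zero_mem⟩
        have hmM : ((n, p) : N × P) ∈ M := by rw [hM]; exact hp.symm
        have hstep := Submodule.smul_mem_smul hrI hmM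
        have heq : (⟨(r, 0), hrR⟩ : R) • ((n, p) : N × P) = ((r • n, (0 : P)) : N × P) := by
          show ((r • n, (0 : T) • p) : N × P) = _
          simp
        rw [heq] at hstep
        exact hstep
      · intro a b ha hb
        have := (I • M).add_mem ha hb
        convert this using 1
        simp
    have key2 : (((0 : N), y) : N × P) ∈ I • M := by
      refine Submodule.smul_induction_on (p := fun z => (((0:N), z) : N × P) ∈ I • M) hy ?_ ?_
      · intro r hr p _
        obtain ⟨n, hn⟩ := hπN (πP p)
        have hrR : (((0 : S), r) : S × T) ∈ R := by
          rw [hR]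
          have : εT r = 0 := by
            rw [← RingHom.mem_ker, hkT]; exact hr
          simp [this]
        have hrI : (⟨(0, r), hrR⟩ : R) ∈ I := by
          rw [hI]
          exact ⟨(maximalIdeal S).zero_mem, hr⟩
        have hmM : ((n, p) : N × P) ∈ M := by rw [hM]; exact hn
        have hstep := Submodule.smul_mem_smul hrI hmM
        have heq : (⟨(0, r), hrR⟩ : R) • ((n, p) : N × P) = (((0 : N), r • p) : N × P) := by
          show (((0 : S) • n, r • p) : N × P) = _
          simp
        rw [heq] at hstep
        exact hstep
      · intro a b ha hb
        have := (I • M).add_mem ha hb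
        convert this using 1
        simp
    have := (I • M).add_mem key1 key2
    convert this using 1
    simp
end
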